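/- arXiv:2302.01651 — 2 statements merged into one kernel-verified Lean document; each statement's English description precedes it below -/
import Mathlib

section
/- Let p be a probability distribution on a finite alphabet X with entropy H(p), let R < (H(p)+1)/2 be fixed, and for each N let S(N) be any set of pairs (i, s) with i ∈ X^N and s ∈ {+,−}^{N−1} such that |S(N)| ≤ 2^{2NR−1}. Assign to (i,s) probability p(i)/2^{N−1} where p(i) = ∏_k p(i_k). Then for every η > 0 there exists N₀ such that for all N ≥ N₀, ∑_{(i,s)∈S(N)} p(i)/2^{N−1} < η. -/
open Finset Filter

/-- Shannon entropy in bits of a distribution on a finite alphabet. -/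
noncomputable def shannonH {X : Type*} [Fintype X] (p : X → ℝ) : ℝ :=
  -∑ x, p x * Real.logb 2 (p x)

private lemma sum_prod_swap {X : Type*} [Fintype X] (N : ℕ) (F : Fin N → X → ℝ) :
    ∑ i : Fin N → X, ∏ k, F k (i k) = ∏ k, ∑ x, F k x :=
  (Fintype.prod_sum F).symm

/-- Mixed second moments of coordinate functions under a product distribution. -/
private lemma moment_lemma {X : Type*} [Fintype X] (p g : X → ℝ)
    (hsum : ∑ x, p x = 1) (hg : ∑ x, p x * g x = 0) (N : ℕ) (k l : Fin N) :
    ∑ i : Fin N → X, (∏ m, p (i m)) * (g (i k) * g (i l))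
      = if k = l then ∑ x, p x * g x ^ 2 else 0 := by
  have key : ∀ i : Fin N → X,
      (∏ m, p (i m)) * (g (i k) * g (i l))
        = ∏ m, (p (i m) * (if k = m then g (i m) else 1) * (if l = m then g (i m) else 1)) := by
    intro i
    rw [Finset.prod_mul_distrib, Finset.prod_mul_distrib]
    simp [mul_assoc, mul_comm, mul_left_comm]
  rw [Finset.sum_congr rfl (fun i _ => key i),
    sum_prod_swap N (fun m x => (p x * if k = m then g x else 1) * if l = m then g x else 1)]
  by_cases hkl : k = l
  · subst hkl
    simp only [if_pos rfl]
    have : ∀ m : Fin N,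
        (∑ x, p x * (if k = m then g x else 1) * (if k = m then g x else 1))
          = if k = m then ∑ x, p x * g x ^ 2 else 1 := by
      intro m
      by_cases h : k = m <;> simp [h, hsum, sq, mul_assoc]
    rw [Finset.prod_congr rfl (fun m _ => this m)]
    simp
  · rw [if_neg hkl]
    apply Finset.prod_eq_zero (Finset.mem_univ k)
    have : ∀ x, (p x * if k = k then g x else 1) * (if l = k then g x else 1) = p x * g x := by
      intro x; simp [Ne.symm hkl]
    rw [Finset.sum_congr rfl (fun x _ => this x), hg]

private lemma second_moment {X : Type*} [Fintype X] (p g : X → ℝ)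
    (hsum : ∑ x, p x = 1) (hg : ∑ x, p x * g x = 0) (N : ℕ) :
    ∑ i : Fin N → X, (∏ m, p (i m)) * (∑ k, g (i k)) ^ 2
      = N * ∑ x, p x * g x ^ 2 := by
  have expand : ∀ i : Fin N → X,
      (∏ m, p (i m)) * (∑ k, g (i k)) ^ 2
        = ∑ k, ∑ l, (∏ m, p (i m)) * (g (i k) * g (i l)) := by
    intro i
    rw [sq, Finset.sum_mul_sum]
    rw [Finset.mul_sum]
    exact Finset.sum_congr rfl fun k _ => by rw [Finset.mul_sum]
  rw [Finset.sum_congr rfl (fun i _ => expand i)]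
  rw [Finset.sum_comm]
  have : ∀ k : Fin N, ∑ i : Fin N → X, ∑ l, (∏ m, p (i m)) * (g (i k) * g (i l))
      = ∑ x, p x * g x ^ 2 := by
    intro k
    rw [Finset.sum_comm]
    calc ∑ l, ∑ i : Fin N → X, (∏ m, p (i m)) * (g (i k) * g (i l))
        = ∑ l : Fin N, if k = l then ∑ x, p x * g x ^ 2 else 0 :=
          Finset.sum_congr rfl fun l _ => moment_lemma p g hsum hg N k l
      _ = ∑ x, p x * g x ^ 2 := by simp
  rw [Finset.sum_congr rfl (fun k _ => this k)]
  simp [Finset.sum_const, nsmul_eq_mul]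

private lemma rpow_sum_eq {ι : Type*} (x : ℝ) (hx : 0 < x) (s : Finset ι) (a : ι → ℝ) :
    x ^ (∑ i ∈ s, a i) = ∏ i ∈ s, x ^ a i := by
  classical
  induction s using Finset.induction_on with
  | empty => simp
  | insert i s' h ih => rw [Finset.sum_insert h, Finset.prod_insert h,
      Real.rpow_add hx, ih]

/-- Any family of sets of (index string, sign string) pairs of cardinality at
most `2^{2NR-1}` with `R < (H(p)+1)/2` carries vanishing probability weight. -/
theorem small_sets_vanishing_weight {X : Type*} [Fintype X]
    (p : X → ℝ) (hpos : ∀ x, 0 ≤ p x) (hsum : ∑ x, p x = 1)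
    (R : ℝ) (hR : R < (shannonH p + 1) / 2)
    (S : (N : ℕ) → Finset ((Fin N → X) × (Fin (N - 1) → Bool)))
    (hcard : ∀ N, ((S N).card : ℝ) ≤ (2 : ℝ) ^ (2 * (N : ℝ) * R - 1)) :
    ∀ η > 0, ∃ N₀, ∀ N ≥ N₀,
      ∑ x ∈ S N, (∏ k, p (x.1 k)) / 2 ^ (N - 1) < η := by
  classical
  intro η hη
  set H := shannonH p with hH
  set δ := (H + 1 - 2 * R) / 2 with hδdef
  have hδ : 0 < δ := by rw [hδdef]; linarith
  set f : X → ℝ := fun x => -Real.logb 2 (p x) with hf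
  set g : X → ℝ := fun x => f x - H with hgdef
  have hpf : ∑ x, p x * f x = H := by
    simp only [hf, mul_neg, hH, shannonH, ← Finset.sum_neg_distrib]
  have hg : ∑ x, p x * g x = 0 := by
    simp only [hgdef, mul_sub]
    rw [Finset.sum_sub_distrib, hpf, ← Finset.sum_mul, hsum, one_mul, sub_self]
  set σ2 := ∑ x, p x * g x ^ 2 with hσ
  have hσ0 : 0 ≤ σ2 :=
    Finset.sum_nonneg fun x _ => mul_nonneg (hpos x) (sq_nonneg _)
  -- the two vanishing bounds
  have h1 : Tendsto (fun n : ℕ => (2:ℝ) ^ (-(n:ℝ) * δ)) atTop (nhds 0) := by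
    have hb0 : (0:ℝ) ≤ (2:ℝ) ^ (-δ) := (Real.rpow_pos_of_pos two_pos _).le
    have hb1 : (2:ℝ) ^ (-δ) < 1 :=
      Real.rpow_lt_one_of_one_lt_of_neg one_lt_two (by linarith)
    refine (tendsto_pow_atTop_nhds_zero_of_lt_one hb0 hb1).congr fun n => ?_
    rw [← Real.rpow_natCast ((2:ℝ) ^ (-δ)) n, ← Real.rpow_mul (by norm_num : (0:ℝ) ≤ 2)]
    congr 1; ring
  have h2 : Tendsto (fun n : ℕ => σ2 / δ ^ 2 / n) atTop (nhds 0) :=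
    tendsto_const_div_atTop_nhds_zero_nat _
  have hev : ∀ᶠ n : ℕ in atTop,
      (2:ℝ) ^ (-(n:ℝ) * δ) + σ2 / δ ^ 2 / n < η := by
    have := h1.add h2
    rw [add_zero] at this
    exact this.eventually_lt_const hη
  obtain ⟨N₀, hN₀⟩ := eventually_atTop.mp (hev.and (eventually_ge_atTop 1))
  refine ⟨N₀, fun N hN => ?_⟩
  obtain ⟨hlt, hN1⟩ := hN₀ N hN
  have hNpos : (0:ℝ) < N := by exact_mod_cast hN1
  have ht0 : ∀ i : Fin N → X, 0 ≤ ∏ k, p (i k) :=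
    fun i => Finset.prod_nonneg fun k _ => hpos _
  have hpow : (0:ℝ) < 2 ^ (N - 1) := by positivity
  -- the typical-set per-term bound
  have key : ∀ i : Fin N → X, (N:ℝ) * (H - δ) ≤ ∑ k, f (i k) →
      ∏ k, p (i k) ≤ (2:ℝ) ^ (-((N:ℝ) * (H - δ))) := by
    intro i hi
    by_cases hz : ∀ k, 0 < p (i k)
    · have hprod : ∏ k, p (i k) = (2:ℝ) ^ (∑ k, -f (i k)) := by
        rw [rpow_sum_eq 2 two_pos]
        refine Finset.prod_congr rfl fun k _ => ?_
        simp only [hf, neg_neg]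
        exact (Real.rpow_logb two_pos (by norm_num) (hz k)).symm
      rw [hprod]
      rw [Real.rpow_le_rpow_left_iff one_lt_two, Finset.sum_neg_distrib]
      linarith
    · push_neg at hz
      obtain ⟨k, hk⟩ := hz
      have hzero : p (i k) = 0 := le_antisymm hk (hpos _)
      rw [Finset.prod_eq_zero (Finset.mem_univ k) hzero]
      positivity
  -- split the sum into typical and atypical
  rw [← Finset.sum_filter_add_sum_filter_not (S N)
      (fun x => (N:ℝ) * (H - δ) ≤ ∑ k, f (x.1 k))]
  have good_bound :
      ∑ x ∈ (S N).filter (fun x => (N:ℝ) * (H - δ) ≤ ∑ k, f (x.1 k)),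
        (∏ k, p (x.1 k)) / 2 ^ (N - 1) ≤ (2:ℝ) ^ (-(N:ℝ) * δ) := by
    have hb0 : (0:ℝ) ≤ (2:ℝ) ^ (-((N:ℝ) * (H - δ))) / 2 ^ (N - 1) :=
      div_nonneg (Real.rpow_pos_of_pos two_pos _).le hpow.le
    calc ∑ x ∈ (S N).filter (fun x => (N:ℝ) * (H - δ) ≤ ∑ k, f (x.1 k)),
          (∏ k, p (x.1 k)) / 2 ^ (N - 1)
        ≤ ((S N).filter (fun x => (N:ℝ) * (H - δ) ≤ ∑ k, f (x.1 k))).card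
            • ((2:ℝ) ^ (-((N:ℝ) * (H - δ))) / 2 ^ (N - 1)) := by
          refine Finset.sum_le_card_nsmul _ _ _ fun x hx => ?_
          rw [Finset.mem_filter] at hx
          gcongr
          exact key x.1 hx.2
      _ ≤ ((S N).card : ℝ) * ((2:ℝ) ^ (-((N:ℝ) * (H - δ))) / 2 ^ (N - 1)) := by
          rw [nsmul_eq_mul]
          exact mul_le_mul_of_nonneg_right
            (by exact_mod_cast Nat.cast_le.mpr (Finset.card_filter_le _ _)) hb0
      _ ≤ (2:ℝ) ^ (2 * (N:ℝ) * R - 1) * ((2:ℝ) ^ (-((N:ℝ) * (H - δ))) / 2 ^ (N - 1)) :=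
          mul_le_mul_of_nonneg_right (hcard N) hb0
      _ = (2:ℝ) ^ (-(N:ℝ) * δ) := by
          rw [show ((2:ℝ) ^ (N - 1) : ℝ) = (2:ℝ) ^ ((N:ℝ) - 1) by
            rw [← Real.rpow_natCast 2 (N - 1), Nat.cast_sub hN1, Nat.cast_one]]
          rw [← Real.rpow_sub two_pos, ← Real.rpow_add two_pos]
          congr 1
          rw [hδdef]; ring
  have bad_bound :
      ∑ x ∈ (S N).filter (fun x => ¬((N:ℝ) * (H - δ) ≤ ∑ k, f (x.1 k))),
        (∏ k, p (x.1 k)) / 2 ^ (N - 1) ≤ σ2 / δ ^ 2 / N := by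
    have step1 :
        ∑ x ∈ (S N).filter (fun x => ¬((N:ℝ) * (H - δ) ≤ ∑ k, f (x.1 k))),
          (∏ k, p (x.1 k)) / 2 ^ (N - 1)
        ≤ ∑ x ∈ (univ : Finset ((Fin N → X) × (Fin (N - 1) → Bool))).filter
              (fun x => ¬((N:ℝ) * (H - δ) ≤ ∑ k, f (x.1 k))),
            (∏ k, p (x.1 k)) / 2 ^ (N - 1) :=
      Finset.sum_le_sum_of_subset_of_nonneg
        (Finset.filter_subset_filter _ (Finset.subset_univ _))
        (fun x _ _ => div_nonneg (ht0 _) hpow.le)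
    have step2 :
        ∑ x ∈ (univ : Finset ((Fin N → X) × (Fin (N - 1) → Bool))).filter
              (fun x => ¬((N:ℝ) * (H - δ) ≤ ∑ k, f (x.1 k))),
            (∏ k, p (x.1 k)) / 2 ^ (N - 1)
        = ∑ i ∈ (univ : Finset (Fin N → X)).filter
              (fun i => ¬((N:ℝ) * (H - δ) ≤ ∑ k, f (i k))), ∏ k, p (i k) := by
      rw [Finset.sum_filter, Finset.sum_filter, Fintype.sum_prod_type]
      refine Finset.sum_congr rfl fun i _ => ?_
      rw [show (fun y : Fin (N - 1) → Bool =>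
            if ¬((N:ℝ) * (H - δ) ≤ ∑ k, f ((i, y).1 k)) then
              (∏ k, p ((i, y).1 k)) / 2 ^ (N - 1) else 0)
          = fun _ => if ¬((N:ℝ) * (H - δ) ≤ ∑ k, f (i k)) then
              (∏ k, p (i k)) / 2 ^ (N - 1) else 0 from rfl]
      rw [Finset.sum_const, nsmul_eq_mul, Finset.card_univ]
      have hcardfun : (Fintype.card (Fin (N - 1) → Bool) : ℝ) = 2 ^ (N - 1) := by
        simp [Fintype.card_fun]
      rw [hcardfun]
      split_ifs with h
      · ring
      · field_simp
    have cheb :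
        ∑ i ∈ (univ : Finset (Fin N → X)).filter
            (fun i => ¬((N:ℝ) * (H - δ) ≤ ∑ k, f (i k))), ∏ k, p (i k)
          ≤ σ2 / δ ^ 2 / N := by
      have hdenom : (0:ℝ) < (N:ℝ) ^ 2 * δ ^ 2 := by positivity
      have hstep : ∀ i ∈ (univ : Finset (Fin N → X)).filter
            (fun i => ¬((N:ℝ) * (H - δ) ≤ ∑ k, f (i k))),
          ∏ k, p (i k)
            ≤ (∏ k, p (i k)) * ((∑ k, g (i k)) ^ 2 / ((N:ℝ) ^ 2 * δ ^ 2)) := by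
        intro i hi
        rw [Finset.mem_filter] at hi
        have hlt' : ∑ k, f (i k) < (N:ℝ) * (H - δ) := not_le.mp hi.2
        have hsg : ∑ k, g (i k) = (∑ k, f (i k)) - N * H := by
          simp [hgdef, Finset.sum_sub_distrib, Finset.card_univ, mul_comm]
        have hneg : ∑ k, g (i k) < -((N:ℝ) * δ) := by rw [hsg]; nlinarith
        have hsq : (N:ℝ) ^ 2 * δ ^ 2 ≤ (∑ k, g (i k)) ^ 2 := by
          have hNδ : (0:ℝ) < (N:ℝ) * δ := mul_pos hNpos hδ
          nlinarith [mul_pos (by linarith : (0:ℝ) < -(∑ k, g (i k) + (N:ℝ) * δ))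
            (by linarith : (0:ℝ) < -(∑ k, g (i k) - (N:ℝ) * δ))]
        exact le_mul_of_one_le_right (ht0 i) ((one_le_div hdenom).mpr hsq)
      calc ∑ i ∈ (univ : Finset (Fin N → X)).filter
              (fun i => ¬((N:ℝ) * (H - δ) ≤ ∑ k, f (i k))), ∏ k, p (i k)
          ≤ ∑ i ∈ (univ : Finset (Fin N → X)).filter
              (fun i => ¬((N:ℝ) * (H - δ) ≤ ∑ k, f (i k))),
              (∏ k, p (i k)) * ((∑ k, g (i k)) ^ 2 / ((N:ℝ) ^ 2 * δ ^ 2)) :=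
            Finset.sum_le_sum hstep
        _ ≤ ∑ i : Fin N → X,
              (∏ k, p (i k)) * ((∑ k, g (i k)) ^ 2 / ((N:ℝ) ^ 2 * δ ^ 2)) :=
            Finset.sum_le_sum_of_subset_of_nonneg (Finset.filter_subset _ _)
              (fun i _ _ => mul_nonneg (ht0 i) (div_nonneg (sq_nonneg _) hdenom.le))
        _ = (∑ i : Fin N → X, (∏ m, p (i m)) * (∑ k, g (i k)) ^ 2)
              / ((N:ℝ) ^ 2 * δ ^ 2) := by
            rw [Finset.sum_div]
            exact Finset.sum_congr rfl fun i _ => (mul_div_assoc _ _ _).symm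
        _ = ((N:ℝ) * σ2) / ((N:ℝ) ^ 2 * δ ^ 2) := by
            rw [second_moment p g hsum hg N]
        _ = σ2 / δ ^ 2 / N := by
            field_simp
    calc _ ≤ _ := step1
      _ = _ := step2
      _ ≤ _ := cheb
  calc _ ≤ (2:ℝ) ^ (-(N:ℝ) * δ) + σ2 / δ ^ 2 / N := add_le_add good_bound bad_bound
    _ < η := hlt
end

section
/- Converse counting bound: let p be a probability distribution on X with entropy H(p), and suppose a decoder assigns to each of at most 2^{2M−1} codewords t a single string (i(t), s(t)) ∈ X^N × {±}^{N−1}. If 2M − 1 < N·H(p) + N − 1 − Nε for some ε > 0, then the total recovered probability ∑_t p(i(t))/2^{N−1} is at most the sum of p(i)/2^{N−1} over a set of at most 2^{2M−1} pairs, which tends to 0 as N → ∞ (with M/N fixed below (H(p)+1)/2). -/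
open Finset Filter

private lemma exists_beta {X : Type*} [Fintype X] (p : X → ℝ) (hpos : ∀ x, 0 ≤ p x)
    (hsum : ∑ x, p x = 1) (R : ℝ) (hR : R < (shannonH p + 1) / 2) :
    ∃ β : ℝ, 1 < β ∧ Real.logb 2 (∑ x, p x ^ β) < (1 - 2*R) * (β - 1) := by
  classical
  set g : ℝ → ℝ := fun b => ∑ x, p x ^ b with hgdef
  set D : ℝ := ∑ x, p x * Real.log (p x) with hDdef
  have hg1 : g 1 = 1 := by simp [hgdef, Real.rpow_one, hsum]
  have hg : HasDerivAt g D 1 := by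
    rw [hgdef, hDdef]
    apply HasDerivAt.fun_sum
    intro x _
    rcases eq_or_lt_of_le (hpos x) with h | h
    · have h0 : p x = 0 := h.symm
      have hev : (fun b : ℝ => p x ^ b) =ᶠ[nhds (1:ℝ)] fun _ => (0:ℝ) := by
        filter_upwards [eventually_ne_nhds (by norm_num : (1:ℝ) ≠ 0)] with b hb
        rw [h0, Real.zero_rpow hb]
      have := (hasDerivAt_const (1:ℝ) (0:ℝ)).congr_of_eventuallyEq hev
      simpa [h0] using this
    · have := (Real.hasStrictDerivAt_const_rpow h (1:ℝ)).hasDerivAt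
      simpa [Real.rpow_one] using this
  have hF : HasDerivAt (fun b => Real.logb 2 (g b)) (D / Real.log 2) 1 := by
    have hlog : HasDerivAt Real.log (g 1)⁻¹ (g 1) := Real.hasDerivAt_log (by rw [hg1]; norm_num)
    have := (hlog.comp 1 hg).div_const (Real.log 2)
    simpa [Real.logb, Function.comp, hg1] using this
  have hslope := hasDerivAt_iff_tendsto_slope.mp hF
  have hDH : D / Real.log 2 = -(shannonH p) := by
    rw [hDdef, shannonH, Finset.sum_div, neg_neg]
    congr 1; ext x; rw [Real.logb]; ring
  have hlt : D / Real.log 2 < 1 - 2*R := by rw [hDH]; linarith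
  have hev : ∀ᶠ b in nhdsWithin (1:ℝ) {(1:ℝ)}ᶜ, slope (fun b => Real.logb 2 (g b)) 1 b < 1 - 2*R :=
    hslope.eventually_lt_const hlt
  have hev' : ∀ᶠ b in nhdsWithin (1:ℝ) (Set.Ioi 1),
      slope (fun b => Real.logb 2 (g b)) 1 b < 1 - 2*R :=
    nhdsWithin_mono 1 (fun b hb => ne_of_gt (Set.mem_Ioi.mp hb)) hev
  obtain ⟨b, hb1, hb2⟩ := (hev'.and (eventually_mem_nhdsWithin)).exists
  refine ⟨b, Set.mem_Ioi.mp hb2, ?_⟩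
  have hb0 : (0:ℝ) < b - 1 := by have := Set.mem_Ioi.mp hb2; linarith
  have hs : slope (fun b => Real.logb 2 (g b)) 1 b
      = Real.logb 2 (g b) / (b - 1) := by
    rw [slope_def_field, hg1]
    norm_num
  rw [hs, div_lt_iff₀ hb0] at hb1
  simpa [hgdef] using hb1

/-- Converse counting bound: if a decoder recovers at most `2^{2M-1}`
pairs `(i,s)` and `M/N` stays below `(H(p)+1)/2`, then the total recovered
probability tends to `0`. -/
theorem converse_counting_bound {X : Type*} [Fintype X]
    (p : X → ℝ) (hpos : ∀ x, 0 ≤ p x) (hsum : ∑ x, p x = 1)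
    (R : ℝ) (hR : R < (shannonH p + 1) / 2)
    (M : ℕ → ℕ) (hM : ∀ N, 1 ≤ N → (M N : ℝ) ≤ R * N)
    (dec : (N : ℕ) → Finset ((Fin N → X) × (Fin (N - 1) → Bool)))
    (hdec : ∀ N, ((dec N).card : ℝ) ≤ (2 : ℝ) ^ (2 * (M N : ℝ) - 1)) :
    Tendsto (fun N : ℕ => ∑ x ∈ dec N, (∏ k, p (x.1 k)) / 2 ^ (N - 1))
      atTop (nhds 0) := by
  classical
  obtain ⟨β, hβ, hLlt⟩ := exists_beta p hpos hsum R hR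
  set G : ℝ := ∑ x, p x ^ β with hGdef
  have hG0 : 0 < G := by
    obtain ⟨x0, hx0⟩ : ∃ x, 0 < p x := by
      by_contra h
      push_neg at h
      have hz : ∀ x, p x = 0 := fun x => le_antisymm (h x) (hpos x)
      rw [Finset.sum_congr rfl (fun x _ => hz x)] at hsum
      simp at hsum
    exact Finset.sum_pos' (fun x _ => Real.rpow_nonneg (hpos x) β)
      ⟨x0, Finset.mem_univ x0, Real.rpow_pos_of_pos hx0 β⟩
  set L : ℝ := Real.logb 2 G with hLdef
  have hGL : (2:ℝ) ^ L = G := Real.rpow_logb two_pos (by norm_num) hG0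
  set d : ℝ := β - 1 with hddef
  have hd : 0 < d := by rw [hddef]; linarith
  set a : ℝ := (2*R + 1 - L/d)/2 with hadef
  have hLd : L / d < 1 - 2*R := (div_lt_iff₀ hd).mpr (by linarith)
  have hexp1 : 2*R - a < 0 := by rw [hadef]; linarith
  have hexp2 : a*d + L - d < 0 := by
    have e : a*d + L - d = ((2*R-1)*d + L)/2 := by
      rw [hadef]; field_simp; ring
    rw [e]; nlinarith
  set r1 : ℝ := (2:ℝ) ^ (2*R - a) with hr1def
  set r2 : ℝ := (2:ℝ) ^ (a*d + L - d) with hr2def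
  have key : ∀ N : ℕ, 1 ≤ N → (∑ x ∈ dec N, (∏ k, p (x.1 k)) / 2 ^ (N-1)) ≤
      r1 ^ N + (2:ℝ)^d * r2 ^ N := by
    intro N hN
    set m : ℕ := N - 1 with hmdef
    have hm : (m:ℝ) = (N:ℝ) - 1 := by
      rw [hmdef, Nat.cast_sub hN]; norm_num
    set W : (Fin N → X) × (Fin (N-1) → Bool) → ℝ :=
      fun x => (∏ k, p (x.1 k)) / 2 ^ (N-1) with hWdef
    have hW0 : ∀ x, 0 ≤ W x := fun x =>
      div_nonneg (Finset.prod_nonneg fun k _ => hpos _) (by positivity)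
    set t : ℝ := (2:ℝ) ^ (-(a*N)) with htdef
    have ht : 0 < t := Real.rpow_pos_of_pos two_pos _
    -- pointwise bound
    have step1 : ∀ x ∈ dec N, W x ≤ t + t^(-d) * W x ^ β := by
      intro x _
      rcases le_or_gt (W x) t with h | h
      · have : 0 ≤ t^(-d) * W x ^ β :=
          mul_nonneg (Real.rpow_nonneg ht.le _) (Real.rpow_nonneg (hW0 x) _)
        linarith
      · have hw0 : 0 < W x := ht.trans h
        have e1 : W x = W x ^ β * W x ^ (-d) := by
          rw [← Real.rpow_add hw0]
          rw [show β + -d = 1 by rw [hddef]; ring, Real.rpow_one]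
        have e2 : W x ^ (-d) ≤ t ^ (-d) :=
          Real.rpow_le_rpow_of_nonpos ht h.le (by linarith)
        calc W x = W x ^ β * W x ^ (-d) := e1
          _ ≤ W x ^ β * t ^ (-d) :=
              mul_le_mul_of_nonneg_left e2 (Real.rpow_nonneg (hW0 x) _)
          _ ≤ t + t^(-d) * W x ^ β := by rw [mul_comm]; linarith [ht.le]
    have step2 : ∑ x ∈ dec N, W x ≤
        ((dec N).card : ℝ) * t + t^(-d) * ∑ x : (Fin N → X) × (Fin (N-1) → Bool), W x ^ β := by
      calc ∑ x ∈ dec N, W x ≤ ∑ x ∈ dec N, (t + t^(-d) * W x ^ β) :=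
            Finset.sum_le_sum step1
        _ = ((dec N).card : ℝ) * t + t^(-d) * ∑ x ∈ dec N, W x ^ β := by
            rw [Finset.sum_add_distrib, Finset.sum_const, ← Finset.mul_sum,
              nsmul_eq_mul]
        _ ≤ _ :=
            add_le_add_right (mul_le_mul_of_nonneg_left
              (Finset.sum_le_sum_of_subset_of_nonneg (Finset.subset_univ _)
                (fun x _ _ => Real.rpow_nonneg (hW0 x) _))
              (Real.rpow_nonneg ht.le _)) _
    -- compute the full sum of W^β
    have hWβ : ∀ x : (Fin N → X) × (Fin (N-1) → Bool),
        W x ^ β = (∏ k, p (x.1 k) ^ β) / (2:ℝ)^((m:ℝ)*β) := by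
      intro x
      have hprod : ((∏ k, p (x.1 k)) : ℝ) ^ β = ∏ k, p (x.1 k) ^ β :=
        (Real.finset_prod_rpow _ _ (fun k _ => hpos _) β).symm
      have h2m : ((2:ℝ) ^ (N-1) : ℝ) = (2:ℝ)^((m:ℕ):ℝ) := by
        rw [Real.rpow_natCast, hmdef]
      rw [hWdef]
      rw [Real.div_rpow (Finset.prod_nonneg fun k _ => hpos _) (by positivity),
        hprod, h2m, ← Real.rpow_mul (by norm_num : (0:ℝ) ≤ 2)]
    have hsumWβ : ∑ x : (Fin N → X) × (Fin (N-1) → Bool), W x ^ β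
        = (2:ℝ)^(m:ℝ) * (G ^ N / ((2:ℝ)^((m:ℝ)*β))) := by
      rw [Fintype.sum_prod_type]
      have hcard : (Fintype.card (Fin (N-1) → Bool) : ℝ) = (2:ℝ)^(m:ℝ) := by
        rw [Fintype.card_fun]
        push_cast
        rw [Real.rpow_natCast]
        norm_num [hmdef]
      have hinner : ∀ i : Fin N → X, ∑ s : Fin (N-1) → Bool, W (i, s) ^ β
          = (2:ℝ)^(m:ℝ) * ((∏ k, p (i k) ^ β) / (2:ℝ)^((m:ℝ)*β)) := by
        intro i
        have hc : ∀ s : Fin (N-1) → Bool,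
            W (i, s) ^ β = (∏ k, p (i k) ^ β) / (2:ℝ)^((m:ℝ)*β) := fun s => hWβ (i, s)
        rw [Finset.sum_congr rfl (fun s _ => hc s), Finset.sum_const,
          Finset.card_univ, nsmul_eq_mul, hcard]
      rw [Finset.sum_congr rfl (fun i _ => hinner i), ← Finset.mul_sum]
      congr 1
      rw [← Finset.sum_div, hGdef, Fintype.sum_pow (fun x => p x ^ β) N]
    -- assemble
    have hterm1 : ((dec N).card : ℝ) * t ≤ r1 ^ N := by
      have h1 : ((dec N).card : ℝ) * t ≤ (2:ℝ)^(2*(M N:ℝ)-1) * (2:ℝ)^(-(a*N)) := by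
        rw [htdef]
        exact mul_le_mul_of_nonneg_right (hdec N) (Real.rpow_pos_of_pos two_pos _).le
      have h2 : (2:ℝ)^(2*(M N:ℝ)-1) * (2:ℝ)^(-(a*N)) = (2:ℝ)^(2*(M N:ℝ)-1-a*N) := by
        rw [← Real.rpow_add two_pos]; ring_nf
      have h3 : (2:ℝ)^(2*(M N:ℝ)-1-a*N) ≤ (2:ℝ)^((2*R-a)*N) := by
        apply Real.rpow_le_rpow_of_exponent_le one_le_two
        have := hM N hN
        nlinarith
      have h4 : (2:ℝ)^((2*R-a)*N) = r1 ^ N := by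
        rw [hr1def, ← Real.rpow_natCast ((2:ℝ)^(2*R-a)) N,
          ← Real.rpow_mul (by norm_num : (0:ℝ) ≤ 2)]
      calc ((dec N).card : ℝ) * t ≤ _ := h1
        _ = _ := h2
        _ ≤ _ := h3
        _ = _ := h4
    have hterm2 : t^(-d) * ∑ x : (Fin N → X) × (Fin (N-1) → Bool), W x ^ β
        = (2:ℝ)^d * r2 ^ N := by
      rw [hsumWβ]
      have hGN : G ^ N = (2:ℝ)^(L*(N:ℝ)) := by
        rw [← hGL, ← Real.rpow_natCast ((2:ℝ)^L) N,
          ← Real.rpow_mul (by norm_num : (0:ℝ) ≤ 2)]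
      have htd : t^(-d) = (2:ℝ)^(a*(N:ℝ)*d) := by
        rw [htdef, ← Real.rpow_mul (by norm_num : (0:ℝ) ≤ 2)]
        ring_nf
      rw [hGN, htd, div_eq_mul_inv, ← Real.rpow_neg (by norm_num : (0:ℝ) ≤ 2),
        ← Real.rpow_add two_pos, ← Real.rpow_add two_pos, ← Real.rpow_add two_pos]
      have hr2N : r2 ^ N = (2:ℝ)^((a*d+L-d)*(N:ℝ)) := by
        rw [hr2def, ← Real.rpow_natCast ((2:ℝ)^(a*d+L-d)) N,
          ← Real.rpow_mul (by norm_num : (0:ℝ) ≤ 2)]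
      rw [hr2N, ← Real.rpow_add two_pos]
      congr 1
      rw [hm, hddef]
      ring
    calc (∑ x ∈ dec N, (∏ k, p (x.1 k)) / 2 ^ (N-1)) = ∑ x ∈ dec N, W x := rfl
      _ ≤ ((dec N).card : ℝ) * t + t^(-d) * ∑ x : (Fin N → X) × (Fin (N-1) → Bool), W x ^ β :=
          step2
      _ ≤ r1 ^ N + (2:ℝ)^d * r2 ^ N := by rw [hterm2]; exact add_le_add_left hterm1 _
  -- the geometric bound tends to zero
  have hr1lt : r1 < 1 := Real.rpow_lt_one_of_one_lt_of_neg one_lt_two hexp1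
  have hr2lt : r2 < 1 := Real.rpow_lt_one_of_one_lt_of_neg one_lt_two hexp2
  have hr1nn : 0 ≤ r1 := Real.rpow_nonneg (by norm_num) _
  have hr2nn : 0 ≤ r2 := Real.rpow_nonneg (by norm_num) _
  have hg0 : Tendsto (fun N : ℕ => r1 ^ N + (2:ℝ)^d * r2 ^ N) atTop (nhds 0) := by
    have h1 := tendsto_pow_atTop_nhds_zero_of_lt_one hr1nn hr1lt
    have h2 := (tendsto_pow_atTop_nhds_zero_of_lt_one hr2nn hr2lt).const_mul ((2:ℝ)^d)
    simpa using h1.add h2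
  refine squeeze_zero' ?_ ?_ hg0
  · filter_upwards with N
    exact Finset.sum_nonneg fun x _ =>
      div_nonneg (Finset.prod_nonneg fun k _ => hpos _) (by positivity)
  · filter_upwards [eventually_ge_atTop 1] with N hN
    exact key N hN
end
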